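/- Fix i ∈ {1,…,N} and j ∈ {1,…,M}. Suppose ε^{(0)}_{i,j}, ε^{(1)}_{i,j}, η_{i,j} are mean zero, (ε^{(0)}_{i,j}, ε^{(1)}_{i,j}) is independent of η_{i,j}, 0 < p_{i,j} < 1, and η_{i,j} equals 1 − p_{i,j} with probability p_{i,j} and −p_{i,j} with probability 1 − p_{i,j} (so Var(η_{i,j}) = p_{i,j}(1 − p_{i,j})). Let σ^{(a)}_{i,j} denote the standard deviation of ε^{(a)}_{i,j} and define V_{i,j} = ε^{(1)}_{i,j}·(1 + η_{i,j}/p_{i,j}) − ε^{(0)}_{i,j}·(1 − η_{i,j}/(1 − p_{i,j})). Then Var(V_{i,j}) = (σ^{(1)}_{i,j})²/p_{i,j} + (σ^{(0)}_{i,j})²/(1 − p_{i,j}); in particular, the covariance between ε^{(1)}_{i,j}·(1 + η_{i,j}/p_{i,j}) and ε^{(0)}_{i,j}·(1 − η_{i,j}/(1 − p_{i,j})) equals 0 regardless of the dependence between ε^{(0)}_{i,j} and ε^{(1)}_{i,j}. -/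

import Mathlib

open MeasureTheory ProbabilityTheory

/-- Variance of a real random variable: `Var X = E[(X - E X)²]`. -/
noncomputable def pVar {Ω : Type*} [MeasurableSpace Ω] (μ : Measure Ω) (X : Ω → ℝ) : ℝ :=
  ∫ ω, (X ω - ∫ ω', X ω' ∂μ) ^ 2 ∂μ

/-- Covariance of real random variables: `Cov(X,Y) = E[XY] - E[X]·E[Y]`. -/
noncomputable def pCov {Ω : Type*} [MeasurableSpace Ω] (μ : Measure Ω) (X Y : Ω → ℝ) : ℝ :=
  (∫ ω, X ω * Y ω ∂μ) - (∫ ω, X ω ∂μ) * (∫ ω, Y ω ∂μ)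

/-- Variance decomposition for the influence-function term of the DR estimator:
with `V = ε⁽¹⁾(1 + η/p) − ε⁽⁰⁾(1 − η/(1−p))`, one has
`Var(V) = (σ⁽¹⁾)²/p + (σ⁽⁰⁾)²/(1−p)`, and the covariance between the two summands
vanishes regardless of the dependence between `ε⁽⁰⁾` and `ε⁽¹⁾`. -/
theorem variance_of_influence_term {Ω : Type*} [MeasurableSpace Ω] (μ : Measure Ω)
    [IsProbabilityMeasure μ]
    (ε0 ε1 η : Ω → ℝ) (p : ℝ)
    (hp0 : 0 < p) (hp1 : p < 1)
    (hmeas0 : Measurable ε0) (hmeas1 : Measurable ε1) (hmeasη : Measurable η)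
    -- finite second moments
    (hL2_0 : MemLp ε0 2 μ) (hL2_1 : MemLp ε1 2 μ)
    -- mean zero
    (hm0 : ∫ ω, ε0 ω ∂μ = 0) (hm1 : ∫ ω, ε1 ω ∂μ = 0) (hmη : ∫ ω, η ω ∂μ = 0)
    -- (ε⁽⁰⁾, ε⁽¹⁾) independent of η
    (hindep : IndepFun (fun ω => (ε0 ω, ε1 ω)) η μ)
    -- η takes value 1 − p with probability p and −p with probability 1 − p
    (hηval : ∀ ω, η ω = 1 - p ∨ η ω = -p)
    (hηdist : μ {ω | η ω = 1 - p} = ENNReal.ofReal p) :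
    pVar μ (fun ω => ε1 ω * (1 + η ω / p) - ε0 ω * (1 - η ω / (1 - p))) =
        pVar μ ε1 / p + pVar μ ε0 / (1 - p) ∧
      pCov μ (fun ω => ε1 ω * (1 + η ω / p)) (fun ω => ε0 ω * (1 - η ω / (1 - p))) = 0 := by
  have hp1' : (0:ℝ) < 1 - p := by linarith
  have hpne : p ≠ 0 := ne_of_gt hp0
  have hp1ne : (1:ℝ) - p ≠ 0 := ne_of_gt hp1'
  set A : Ω → ℝ := fun ω => 1 + η ω / p with hA_def
  set B : Ω → ℝ := fun ω => 1 - η ω / (1 - p) with hB_def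
  -- pointwise values of A and B
  have hAval : ∀ ω, A ω = 1 / p ∨ A ω = 0 := by
    intro ω
    rcases hηval ω with h | h
    · left; simp only [hA_def, h]; field_simp; ring
    · right; simp only [hA_def, h]; field_simp; ring
  have hBval : ∀ ω, B ω = 0 ∨ B ω = 1 / (1 - p) := by
    intro ω
    rcases hηval ω with h | h
    · left; simp only [hB_def, h]; field_simp; ring
    · right; simp only [hB_def, h]; field_simp; ring
  have hAB : ∀ ω, A ω * B ω = 0 := by
    intro ω
    rcases hηval ω with h | h
    · simp only [hA_def, hB_def, h]; field_simp; ring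
    · simp only [hA_def, hB_def, h]; field_simp; ring
  have hA2 : ∀ ω, A ω ^ 2 = A ω / p := by
    intro ω
    rcases hAval ω with h | h <;> rw [h] <;> field_simp <;> ring
  have hB2 : ∀ ω, B ω ^ 2 = B ω / (1 - p) := by
    intro ω
    rcases hBval ω with h | h <;> rw [h] <;> field_simp <;> ring
  -- measurability of A, B
  have hmeasA : Measurable A := measurable_const.add (hmeasη.div_const p)
  have hmeasB : Measurable B := measurable_const.sub (hmeasη.div_const (1 - p))
  -- integrability
  have hAint : Integrable A μ := by
    refine (memLp_top_of_bound hmeasA.aestronglyMeasurable (1/p)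
      (Filter.Eventually.of_forall fun ω => ?_)).integrable le_top
    rcases hAval ω with h | h <;> rw [h] <;> simp [abs_of_nonneg, le_of_lt hp0] <;> positivity
  have hBint : Integrable B μ := by
    refine (memLp_top_of_bound hmeasB.aestronglyMeasurable (1/(1-p))
      (Filter.Eventually.of_forall fun ω => ?_)).integrable le_top
    rcases hBval ω with h | h <;> rw [h] <;> simp [abs_of_nonneg, le_of_lt hp1'] <;> positivity
  have hε0int : Integrable ε0 μ := hL2_0.integrable (by norm_num)
  have hε1int : Integrable ε1 μ := hL2_1.integrable (by norm_num)
  have hε0sq : Integrable (fun ω => ε0 ω ^ 2) μ := hL2_0.integrable_sq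
  have hε1sq : Integrable (fun ω => ε1 ω ^ 2) μ := hL2_1.integrable_sq
  -- independence
  have hiA1 : IndepFun ε1 A μ :=
    hindep.comp (measurable_snd : Measurable fun x : ℝ × ℝ => x.2)
      (measurable_const.add (measurable_id.div_const p))
  have hiB0 : IndepFun ε0 B μ :=
    hindep.comp (measurable_fst : Measurable fun x : ℝ × ℝ => x.1)
      (measurable_const.sub (measurable_id.div_const (1 - p)))
  have hiA1sq : IndepFun (fun ω => ε1 ω ^ 2) A μ :=
    hindep.comp ((measurable_snd : Measurable fun x : ℝ × ℝ => x.2).pow measurable_const)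
      (measurable_const.add (measurable_id.div_const p))
  have hiB0sq : IndepFun (fun ω => ε0 ω ^ 2) B μ :=
    hindep.comp ((measurable_fst : Measurable fun x : ℝ × ℝ => x.1).pow measurable_const)
      (measurable_const.sub (measurable_id.div_const (1 - p)))
  -- integrability of products
  have hε1A : Integrable (fun ω => ε1 ω * A ω) μ := hiA1.integrable_mul hε1int hAint
  have hε0B : Integrable (fun ω => ε0 ω * B ω) μ := hiB0.integrable_mul hε0int hBint
  have hε1sqA : Integrable (fun ω => ε1 ω ^ 2 * A ω) μ := hiA1sq.integrable_mul hε1sq hAint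
  have hε0sqB : Integrable (fun ω => ε0 ω ^ 2 * B ω) μ := hiB0sq.integrable_mul hε0sq hBint
  -- η integrable
  have hηint : Integrable η μ := by
    refine (memLp_top_of_bound hmeasη.aestronglyMeasurable 1
      (Filter.Eventually.of_forall fun ω => ?_)).integrable le_top
    rcases hηval ω with h | h <;> rw [h] <;> rw [Real.norm_eq_abs, abs_le] <;>
      constructor <;> linarith
  -- means
  have hEA : ∫ ω, A ω ∂μ = 1 := by
    simp only [hA_def]
    rw [integral_add (integrable_const 1) (hηint.div_const p), integral_div, hmη]
    simp
  have hEB : ∫ ω, B ω ∂μ = 1 := by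
    simp only [hB_def]
    rw [integral_sub (integrable_const 1) (hηint.div_const (1 - p)), integral_div, hmη]
    simp
  have hEε1A : ∫ ω, ε1 ω * A ω ∂μ = 0 := by
    have := hiA1.integral_mul_eq_mul_integral hε1int.aestronglyMeasurable hAint.aestronglyMeasurable
    rw [show (∫ ω, ε1 ω * A ω ∂μ) = integral μ (ε1 * A) from rfl, this, hm1, zero_mul]
  have hEε0B : ∫ ω, ε0 ω * B ω ∂μ = 0 := by
    have := hiB0.integral_mul_eq_mul_integral hε0int.aestronglyMeasurable hBint.aestronglyMeasurable
    rw [show (∫ ω, ε0 ω * B ω ∂μ) = integral μ (ε0 * B) from rfl, this, hm0, zero_mul]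
  have hEε1sqA : ∫ ω, ε1 ω ^ 2 * A ω ∂μ = ∫ ω, ε1 ω ^ 2 ∂μ := by
    have := hiA1sq.integral_mul_eq_mul_integral hε1sq.aestronglyMeasurable hAint.aestronglyMeasurable
    rw [show (∫ ω, ε1 ω ^ 2 * A ω ∂μ) = integral μ ((fun ω => ε1 ω ^ 2) * A) from rfl, this,
      hEA, mul_one]
  have hEε0sqB : ∫ ω, ε0 ω ^ 2 * B ω ∂μ = ∫ ω, ε0 ω ^ 2 ∂μ := by
    have := hiB0sq.integral_mul_eq_mul_integral hε0sq.aestronglyMeasurable hBint.aestronglyMeasurable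
    rw [show (∫ ω, ε0 ω ^ 2 * B ω ∂μ) = integral μ ((fun ω => ε0 ω ^ 2) * B) from rfl, this,
      hEB, mul_one]
  -- variances as second moments
  have hVar1 : pVar μ ε1 = ∫ ω, ε1 ω ^ 2 ∂μ := by
    simp only [pVar, hm1, sub_zero]
  have hVar0 : pVar μ ε0 = ∫ ω, ε0 ω ^ 2 ∂μ := by
    simp only [pVar, hm0, sub_zero]
  constructor
  · -- variance identity
    have hEV : ∫ ω, ε1 ω * A ω - ε0 ω * B ω ∂μ = 0 := by
      rw [integral_sub hε1A hε0B, hEε1A, hEε0B, sub_zero]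
    have hptwise : ∀ ω, (ε1 ω * A ω - ε0 ω * B ω - 0) ^ 2
        = ε1 ω ^ 2 * A ω / p + ε0 ω ^ 2 * B ω / (1 - p) := by
      intro ω
      have h1 := hA2 ω
      have h2 := hB2 ω
      have h3 := hAB ω
      rw [sub_zero]
      have : (ε1 ω * A ω - ε0 ω * B ω) ^ 2
          = ε1 ω ^ 2 * A ω ^ 2 - 2 * (ε1 ω * ε0 ω) * (A ω * B ω) + ε0 ω ^ 2 * B ω ^ 2 := by
        ring
      rw [this, h1, h2, h3]
      ring
    show pVar μ (fun ω => ε1 ω * A ω - ε0 ω * B ω) = _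
    simp only [pVar, hEV]
    calc ∫ ω, (ε1 ω * A ω - ε0 ω * B ω - 0) ^ 2 ∂μ
        = ∫ ω, (ε1 ω ^ 2 * A ω / p + ε0 ω ^ 2 * B ω / (1 - p)) ∂μ := by
          exact integral_congr_ae (Filter.Eventually.of_forall hptwise)
      _ = (∫ ω, ε1 ω ^ 2 * A ω ∂μ) / p + (∫ ω, ε0 ω ^ 2 * B ω ∂μ) / (1 - p) := by
          rw [integral_add (hε1sqA.div_const p) (hε0sqB.div_const (1 - p)),
            integral_div, integral_div]
      _ = pVar μ ε1 / p + pVar μ ε0 / (1 - p) := by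
          rw [hEε1sqA, hEε0sqB, hVar1, hVar0]
  · -- covariance
    have hzero : ∫ ω, (ε1 ω * A ω) * (ε0 ω * B ω) ∂μ = 0 := by
      have : ∀ ω, (ε1 ω * A ω) * (ε0 ω * B ω) = 0 := by
        intro ω
        have := hAB ω
        calc (ε1 ω * A ω) * (ε0 ω * B ω) = (ε1 ω * ε0 ω) * (A ω * B ω) := by ring
          _ = 0 := by rw [this, mul_zero]
      simp only [this, integral_zero]
    show pCov μ (fun ω => ε1 ω * A ω) (fun ω => ε0 ω * B ω) = 0
    simp only [pCov, hzero, hEε1A, hEε0B, zero_mul, sub_zero]
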